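/- Let Q ∈ ℝ^{n×n} be symmetric with Q₁₁ = 1, let Γ be the lower triangular part of Q, D the diagonal of Q, and define B = diag(1, Γ^{-T}_{2:n}·D_{2:n}) where Γ^{-T}_{2:n} and D_{2:n} are the trailing (n−1)×(n−1) submatrices of Γ^{-T} and D. If D = I then the matrices B^{-1}Q^{-1}Γ and ΓᵀQ^{-1}Γ have the same multiset of eigenvalues. -/

import Mathlib

open Matrix Polynomial Real

noncomputable def lowerTri {n : ℕ} (Q : Matrix (Fin n) (Fin n) ℝ) : Matrix (Fin n) (Fin n) ℝ :=
  fun i j => if j ≤ i then Q i j else 0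

noncomputable def l2norm {n : ℕ} (M : Matrix (Fin n) (Fin n) ℝ) : ℝ :=
  ‖(Matrix.toEuclideanCLM (𝕜 := ℝ) M : EuclideanSpace ℝ (Fin n) →L[ℝ] EuclideanSpace ℝ (Fin n))‖

noncomputable def specRad {n : ℕ} (M : Matrix (Fin n) (Fin n) ℝ) : ℝ :=
  sSup (Set.image (fun z : ℂ => ‖z‖) (spectrum ℂ (M.map (algebraMap ℝ ℂ))))

/-- Charpoly of a matrix whose first column is `e₀`. -/
lemma charpoly_of_col0 {n : ℕ} (A : Matrix (Fin (n + 1)) (Fin (n + 1)) ℝ)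
    (h : ∀ i, A i 0 = if i = 0 then 1 else 0) :
    A.charpoly = (X - 1) * (A.submatrix Fin.succ Fin.succ).charpoly := by
  have hsub : (charmatrix A).submatrix Fin.succ Fin.succ
      = charmatrix (A.submatrix Fin.succ Fin.succ) := by
    ext i j
    by_cases hij : i = j
    · subst hij; simp [charmatrix_apply_eq]
    · rw [submatrix_apply, charmatrix_apply_ne _ _ _ (fun hh => hij (Fin.succ_injective _ hh)),
        charmatrix_apply_ne _ _ _ hij, submatrix_apply]
  rw [Matrix.charpoly, Matrix.charpoly, det_succ_column_zero, ← hsub]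
  rw [Finset.sum_eq_single (0 : Fin (n + 1))]
  · simp only [Fin.val_zero, pow_zero, one_mul, Fin.succAbove_zero]
    rw [charmatrix_apply_eq, h 0]
    simp
  · intro i _ hi
    rw [charmatrix_apply_ne _ _ _ hi, h i, if_neg hi]
    simp
  · simp

theorem stmt6 {n : ℕ} (Q Γ B : Matrix (Fin (n + 1)) (Fin (n + 1)) ℝ)
    (hQsym : Q.IsSymm) (hQpd : Q.PosDef) (hdiag : ∀ i, Q i i = 1)
    (hΓ : Γ = lowerTri Q)
    (hB : ∀ i j, B i j = if i = 0 then (if j = 0 then (1 : ℝ) else 0)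
        else if j = 0 then 0 else (Γ⁻¹)ᵀ i j) :
    (B⁻¹ * Q⁻¹ * Γ).charpoly = (Γᵀ * Q⁻¹ * Γ).charpoly := by
  -- basic facts about Γ
  have hΓrow0 : ∀ j, Γ 0 j = if j = 0 then 1 else 0 := by
    intro j
    rw [hΓ]
    simp only [lowerTri]
    by_cases hj : j = 0
    · subst hj; simp [hdiag 0]
    · rw [if_neg hj, if_neg (fun h : j ≤ 0 => hj (le_antisymm h (Fin.zero_le j)))]
  have hΓcol0 : ∀ i, Γ i 0 = Q i 0 := by
    intro i; rw [hΓ]; simp [lowerTri, Fin.zero_le]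
  have hΓtri : Γ.BlockTriangular OrderDual.toDual := by
    intro i j hij
    have hij' : i < j := hij
    rw [hΓ]
    simp only [lowerTri]
    rw [if_neg (not_le.2 hij')]
  have hΓdet : IsUnit Γ.det := by
    rw [det_of_lowerTriangular Γ hΓtri]
    have : ∀ i : Fin (n + 1), Γ i i = 1 := by
      intro i; rw [hΓ]; simp [lowerTri, hdiag i]
    simp [this]
  have hΓinv : Γ * Γ⁻¹ = 1 := mul_nonsing_inv Γ hΓdet
  have hΓinv' : Γ⁻¹ * Γ = 1 := nonsing_inv_mul Γ hΓdet
  have hQdet : IsUnit Q.det := hQpd.det_pos.ne'.isUnit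
  have hQinv : Q⁻¹ * Q = 1 := nonsing_inv_mul Q hQdet
  -- row 0 of Γ⁻¹ is e₀
  have hΓinvrow0 : ∀ j, Γ⁻¹ 0 j = if j = 0 then 1 else 0 := by
    intro j
    have := congrFun (congrFun hΓinv 0) j
    rw [Matrix.mul_apply] at this
    rw [Finset.sum_congr rfl (fun k _ => by rw [hΓrow0 k])] at this
    simp only [ite_mul, one_mul, zero_mul] at this
    rw [Finset.sum_ite_eq' Finset.univ (0 : Fin (n + 1)) (fun k => Γ⁻¹ k j)] at this
    simp only [Finset.mem_univ, if_true] at this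
    rw [this, Matrix.one_apply]
    simp [eq_comm]
  -- first column of Q⁻¹ * Γ is e₀
  set P := Q⁻¹ * Γ with hP
  have hPcol0 : ∀ i, P i 0 = if i = 0 then 1 else 0 := by
    intro i
    rw [hP, Matrix.mul_apply]
    rw [Finset.sum_congr rfl (fun k _ => by rw [hΓcol0 k])]
    have := congrFun (congrFun hQinv i) 0
    rw [Matrix.mul_apply] at this
    rw [this, Matrix.one_apply]
  -- compute B⁻¹
  set C : Matrix (Fin (n + 1)) (Fin (n + 1)) ℝ := fun i j =>
    if i = 0 then (if j = 0 then 1 else 0) else if j = 0 then 0 else Γᵀ i j with hC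
  have hBC : B * C = 1 := by
    ext i j
    rw [Matrix.mul_apply]
    by_cases hi : i = 0
    · subst hi
      rw [Finset.sum_congr rfl (fun k _ => by rw [hB 0 k, if_pos rfl])]
      simp only [ite_mul, one_mul, zero_mul]
      rw [Finset.sum_ite_eq' Finset.univ (0 : Fin (n + 1)) (fun k => C k j)]
      simp only [Finset.mem_univ, if_true, hC]
      rw [Matrix.one_apply]
      simp [eq_comm]
    · rw [Finset.sum_congr rfl (fun k _ => by rw [hB i k, if_neg hi])]
      by_cases hj : j = 0
      · subst hj
        rw [Matrix.one_apply_ne hi]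
        apply Finset.sum_eq_zero
        intro k _
        by_cases hk : k = 0
        · subst hk; simp
        · simp [hC, hk]
      · -- entry (i,j), i ≠ 0, j ≠ 0 : reduces to ((Γ⁻¹)ᵀ * Γᵀ) i j
        have key : ∀ k, (if k = 0 then (0:ℝ) else (Γ⁻¹)ᵀ i k) * C k j
            = (Γ⁻¹)ᵀ i k * Γᵀ k j := by
          intro k
          by_cases hk : k = 0
          · subst hk
            simp only [transpose_apply]
            rw [hΓinvrow0 i, if_neg hi]
            simp
          · simp [hC, hk, hj]
        rw [Finset.sum_congr rfl (fun k _ => key k)]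
        have h2 := congrFun (congrFun hΓinv j) i
        rw [Matrix.mul_apply] at h2
        rw [show ∑ k, (Γ⁻¹)ᵀ i k * Γᵀ k j = ∑ k, Γ j k * Γ⁻¹ k i from
          Finset.sum_congr rfl (fun k _ => mul_comm _ _), h2, Matrix.one_apply,
          Matrix.one_apply]
        by_cases hij : i = j
        · simp [hij]
        · simp [hij, Ne.symm hij]
  have hBinv : B⁻¹ = C := inv_eq_right_inv hBC
  -- the two matrices
  have h1col : ∀ i, (B⁻¹ * Q⁻¹ * Γ) i 0 = if i = 0 then 1 else 0 := by
    intro i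
    rw [Matrix.mul_assoc, ← hP, hBinv, Matrix.mul_apply]
    rw [Finset.sum_congr rfl (fun k _ => by rw [hPcol0 k])]
    simp only [mul_ite, mul_one, mul_zero]
    rw [Finset.sum_ite_eq' Finset.univ (0 : Fin (n + 1)) (fun k => C i k)]
    simp only [Finset.mem_univ, if_true, hC]
    all_goals (by_cases hi : i = 0 <;> simp [hi])
  have h2col : ∀ i, (Γᵀ * Q⁻¹ * Γ) i 0 = if i = 0 then 1 else 0 := by
    intro i
    rw [Matrix.mul_assoc, ← hP, Matrix.mul_apply]
    rw [Finset.sum_congr rfl (fun k _ => by rw [hPcol0 k])]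
    simp only [mul_ite, mul_one, mul_zero]
    rw [Finset.sum_ite_eq' Finset.univ (0 : Fin (n + 1)) (fun k => Γᵀ i k)]
    simp only [Finset.mem_univ, if_true, transpose_apply]
    rw [hΓrow0 i]
  have hrows : ∀ i j, i ≠ 0 → (B⁻¹ * Q⁻¹ * Γ) i j = (Γᵀ * Q⁻¹ * Γ) i j := by
    intro i j hi
    rw [Matrix.mul_assoc, Matrix.mul_assoc, ← hP, hBinv, Matrix.mul_apply, Matrix.mul_apply]
    apply Finset.sum_congr rfl
    intro k _
    congr 1
    simp only [hC, if_neg hi]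
    by_cases hk : k = 0
    · subst hk
      simp only [transpose_apply]
      rw [hΓrow0 i, if_neg hi]
      simp
    · rw [if_neg hk]
  rw [charpoly_of_col0 _ h1col, charpoly_of_col0 _ h2col]
  congr 1
  congr 1
  ext i j
  exact hrows i.succ j.succ (Fin.succ_ne_zero i)
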